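/- Suppose λ1 = n for a natural number n (cast to ℂ in the operators) and λ2 ∈ ℂ. Then: (a) for every natural number k with k ≤ n+1, E1^k(x^{n+1}) = (∏_{i=0}^{k−1} (n+1−i))·x^{n+1−k} = k!·binom(n+1, k)·x^{n+1−k}; and (b) for every natural number k, F1^k(x^{n+1}) = (−1)^k·k!·x^{n+1+k}. -/

import Mathlib

open MvPolynomial LieAlgebra.SpecialLinear

noncomputable section

/-- The polynomial algebra `R = ℂ[x,ξ2,ξ3]`
(variable `x` has index `0`, `ξ2` index `1`, `ξ3` index `2`). -/
abbrev R3 : Type := MvPolynomial (Fin 3) ℂ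

/-- Multiplication by the `i`-th variable as a `ℂ`-linear endomorphism of `R`
(`ξ 0` is multiplication by `x`, `ξ 1` by `ξ2`, `ξ 2` by `ξ3`). -/
def ξ (i : Fin 3) : Module.End ℂ R3 := LinearMap.mulLeft ℂ (X i)

/-- The partial derivative with respect to the `i`-th variable as a `ℂ`-linear endomorphism
of `R` (`D 0 = ∂x`, `D 1 = ∂2`, `D 2 = ∂3`). -/
def D (i : Fin 3) : Module.End ℂ R3 := (pderiv i).toLinearMap

/-- `F1 = ξ2∂3 − x(x∂x − (1/2)ξ3∂3 − λ1) − (1/2)x(ξ2 − (1/2)xξ3)∂2`. -/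
def F1 (lam1 : ℂ) : Module.End ℂ R3 :=
  ξ 1 * D 2 - ξ 0 * (ξ 0 * D 0 - (1/2 : ℂ) • (ξ 2 * D 2) - lam1 • 1)
    - (1/2 : ℂ) • (ξ 0 * (ξ 1 - (1/2 : ℂ) • (ξ 0 * ξ 2)) * D 1)

/-- `F2` is multiplication by `ξ3`. -/
def F2 : Module.End ℂ R3 := ξ 2

/-- `F12` is multiplication by `−ξ2 − (1/2)xξ3`. -/
def F12 : Module.End ℂ R3 := -ξ 1 - (1/2 : ℂ) • (ξ 0 * ξ 2)

/-- `E1 = ∂x + (1/2)ξ3∂2`. -/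
def E1 : Module.End ℂ R3 := D 0 + (1/2 : ℂ) • (ξ 2 * D 1)

/-- `E2 = (x∂x − ξ2∂2 − ξ3∂3 + λ2)∂3
      + (1/2)x(x∂x + ξ2∂2 − (1/2)xξ3∂2 − 2λ1 − λ2 − 1)∂2`. -/
def E2 (lam1 lam2 : ℂ) : Module.End ℂ R3 :=
  (ξ 0 * D 0 - ξ 1 * D 1 - ξ 2 * D 2 + lam2 • 1) * D 2
    + (1/2 : ℂ) • (ξ 0 * (ξ 0 * D 0 + ξ 1 * D 1 - (1/2 : ℂ) • (ξ 0 * ξ 2 * D 1)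
        - (2 * lam1 + lam2 + 1) • 1) * D 1)

/-- `E12 = ∂x∂3 + (ξ2∂2 + (1/2)ξ3∂3 − λ1 − λ2 − 1/2)∂2 + (1/2)x(∂x − (1/2)ξ3∂2)∂2`. -/
def E12 (lam1 lam2 : ℂ) : Module.End ℂ R3 :=
  D 0 * D 2 + (ξ 1 * D 1 + (1/2 : ℂ) • (ξ 2 * D 2) - (lam1 + lam2 + 1/2) • 1) * D 1
    + (1/2 : ℂ) • (ξ 0 * (D 0 - (1/2 : ℂ) • (ξ 2 * D 1)) * D 1)

/-- `H1 = −2x∂x − ξ2∂2 + ξ3∂3 + λ1`. -/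
def H1 (lam1 : ℂ) : Module.End ℂ R3 :=
  (-2 : ℂ) • (ξ 0 * D 0) - ξ 1 * D 1 + ξ 2 * D 2 + lam1 • 1

/-- `H2 = x∂x − ξ2∂2 − 2ξ3∂3 + λ2`. -/
def H2 (lam2 : ℂ) : Module.End ℂ R3 :=
  ξ 0 * D 0 - ξ 1 * D 1 + (-2 : ℂ) • (ξ 2 * D 2) + lam2 • 1

lemma pderiv0_xpow (m : ℕ) : (pderiv (0:Fin 3)) ((X 0 : R3) ^ m) = (m:ℂ) • X 0 ^ (m-1) := by
  rcases m with _ | m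
  · simp
  · rw [Derivation.leibniz_pow]; simp [← Nat.cast_smul_eq_nsmul ℂ]

lemma pderiv_ne_xpow (i : Fin 3) (hi : i ≠ 0) (m : ℕ) :
    (pderiv i) ((X 0 : R3) ^ m) = 0 := by
  rw [Derivation.leibniz_pow]; simp [pderiv_X, Pi.single_apply, hi]

lemma E1_xpow (m : ℕ) : E1 ((X 0 : R3) ^ m) = (m:ℂ) • X 0 ^ (m-1) := by
  simp [E1, D, ξ, Module.End.mul_apply, pderiv0_xpow, pderiv_ne_xpow 1 (by decide),
    LinearMap.add_apply, smul_eq_C_mul]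

lemma F1_xpow (c : ℂ) (m : ℕ) :
    F1 c ((X 0 : R3) ^ m) = (c - m) • X 0 ^ (m+1) := by
  rcases m with _ | m
  · simp [F1, D, ξ, Module.End.mul_apply, pderiv0_xpow, pderiv_ne_xpow 1 (by decide),
      pderiv_ne_xpow 2 (by decide), LinearMap.sub_apply, LinearMap.smul_apply, smul_smul]
  · simp [F1, D, ξ, Module.End.mul_apply, pderiv0_xpow, pderiv_ne_xpow 1 (by decide),
      pderiv_ne_xpow 2 (by decide), LinearMap.sub_apply, LinearMap.smul_apply, smul_smul,
      smul_eq_C_mul]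
    push_cast
    ring

lemma prod_cast (n k : ℕ) (h : k ≤ n + 1) :
    (∏ i ∈ Finset.range k, ((n : ℂ) + 1 - (i : ℂ))) = ((n+1).descFactorial k : ℂ) := by
  rw [Nat.descFactorial_eq_prod_range, Nat.cast_prod]
  apply Finset.prod_congr rfl
  intro i hi
  have : i ≤ n + 1 := le_trans (le_of_lt (Finset.mem_range.mp hi)) h
  push_cast [Nat.cast_sub this]
  ring

/-- In the `s1`-twisted Verma module `M^{s1}(λ)` with `λ1 = n ∈ ℕ`:
(a) for `k ≤ n+1`, `E1^k(x^{n+1}) = (∏_{i=0}^{k−1}(n+1−i))·x^{n+1−k} = k!·C(n+1,k)·x^{n+1−k}`;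
(b) for every `k`, `F1^k(x^{n+1}) = (−1)^k·k!·x^{n+1+k}`. -/
theorem E1_F1_pow_apply_xpow (n : ℕ) (lam2 : ℂ) :
    (∀ k : ℕ, k ≤ n + 1 →
      (E1 ^ k) (X 0 ^ (n + 1) : R3) =
          (∏ i ∈ Finset.range k, ((n : ℂ) + 1 - (i : ℂ))) • X 0 ^ (n + 1 - k) ∧
      (E1 ^ k) (X 0 ^ (n + 1) : R3) =
          ((k.factorial : ℂ) * ((n + 1).choose k : ℂ)) • X 0 ^ (n + 1 - k)) ∧
    (∀ k : ℕ,
      (F1 (n : ℂ) ^ k) (X 0 ^ (n + 1) : R3) =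
        ((-1 : ℂ) ^ k * (k.factorial : ℂ)) • X 0 ^ (n + 1 + k)) := by
  have key : ∀ k : ℕ, k ≤ n + 1 →
      (E1 ^ k) (X 0 ^ (n + 1) : R3) =
        (∏ i ∈ Finset.range k, ((n : ℂ) + 1 - (i : ℂ))) • X 0 ^ (n + 1 - k) := by
    intro k
    induction k with
    | zero => simp
    | succ k ih =>
      intro hk
      have hk' : k ≤ n + 1 := le_trans (Nat.le_succ k) hk
      rw [pow_succ', Module.End.mul_apply, ih hk', map_smul, E1_xpow,
        Finset.prod_range_succ, smul_smul]
      have h1 : ((n + 1 - k : ℕ) : ℂ) = (n : ℂ) + 1 - (k : ℂ) := by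
        push_cast [Nat.cast_sub hk']; ring
      have h2 : n + 1 - k - 1 = n + 1 - (k + 1) := by omega
      rw [h1, h2, mul_comm]
  constructor
  · intro k hk
    refine ⟨key k hk, ?_⟩
    rw [key k hk, prod_cast n k hk, Nat.descFactorial_eq_factorial_mul_choose]
    push_cast; ring_nf
  · intro k
    induction k with
    | zero => simp
    | succ k ih =>
      rw [pow_succ', Module.End.mul_apply, ih, map_smul, F1_xpow, smul_smul]
      congr 1
      push_cast [Nat.factorial_succ, pow_succ]
      ring
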